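/- Let R be a commutative ring and let f = r₁ + ⋯ + r_n be an element of R. If the ideal generated by r₁, …, r_n is all of R and r_i r_k is nilpotent for all i ≠ k, then f is invertible in R. -/

import Mathlib

/-- If `f = r₁ + ⋯ + r_n` in a commutative ring `R`, the ideal generated by `r₁, …, r_n` is
all of `R`, and `r_i * r_k` is nilpotent whenever `i ≠ k`, then `f` is invertible. -/
theorem isUnit_sum_of_span_top_of_pairwise_nilpotent
    {R : Type*} [CommRing R] (n : ℕ) (r : Fin n → R)
    (hspan : Ideal.span (Set.range r) = ⊤)
    (hnil : ∀ i k : Fin n, i ≠ k → IsNilpotent (r i * r k)) :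
    IsUnit (∑ i, r i) := by
  have h1 : (1 : R) ∈ Ideal.span (Set.range r) := by rw [hspan]; trivial
  obtain ⟨c, hc⟩ := Submodule.mem_span_range_iff_exists_fun R |>.mp h1
  set g : R := ∑ i, c i ^ 2 * r i with hg
  have key : IsNilpotent ((∑ i, r i) * g - 1) := by
    have h2 : (1 : R) = ∑ i, ∑ k, (c i * r i) * (c k * r k) := by
      rw [← Finset.sum_mul_sum]
      simp_rw [smul_eq_mul] at hc
      rw [hc, one_mul]
    have h3 : (∑ i, r i) * g = ∑ i, ∑ k, (c k ^ 2 * r k) * r i := by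
      rw [Finset.sum_mul]
      congr 1; ext i
      rw [mul_comm, Finset.sum_mul]
    rw [h3, h2, ← Finset.sum_sub_distrib]
    apply isNilpotent_sum
    intro i _
    rw [← Finset.sum_sub_distrib]
    apply isNilpotent_sum
    intro k _
    rcases eq_or_ne i k with rfl | hik
    · have : c i ^ 2 * r i * r i - c i * r i * (c i * r i) = 0 := by ring
      rw [this]
      exact IsNilpotent.zero
    · have h4 : IsNilpotent (r i * r k) := hnil i k hik
      have : c k ^ 2 * r k * r i - c i * r i * (c k * r k)
          = (c k ^ 2 - c i * c k) * (r i * r k) := by ring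
      rw [this]
      exact (Commute.all _ _).isNilpotent_mul_left h4
  have hu : IsUnit ((∑ i, r i) * g) := by
    have := key.isUnit_add_one
    rwa [sub_add_cancel] at this
  exact isUnit_of_mul_isUnit_left hu
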